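/- Let H be a nonempty hypothesis class and G a nonempty set of groups, each with P_g > 0. The minimax value of the step-calibration multi-objective game is zero: inf_{p ∈ P} sup_{σ,v,w,h,g} E_{(x,y)~D}[ℓ_{σ,v,w,h,g}(p,(x,y))] = 0. In particular, for every p ∈ P the supremum over objectives is nonnegative, and any measurable [0,1]-valued version p̄ of the conditional expectation x ↦ E_D[y | x] satisfies E_{(x,y)~D}[ℓ_{σ,v,w,h,g}(p̄,(x,y))] = 0 for every σ, v, w, h, g. -/

import Mathlib

open MeasureTheory ProbabilityTheory Set

noncomputable section

/-- Real value of a Boolean label. -/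
def lab (y : Bool) : ℝ := if y then 1 else 0

/-- Conditional expectation of `f` under `D`, given that the group membership
function `g` evaluates to `true` on the context. -/
def condE {X : Type*} [MeasurableSpace X] (D : Measure (X × Bool)) (g : X → Bool)
    (f : X × Bool → ℝ) : ℝ :=
  ∫ z, f z ∂(D[|{z : X × Bool | g z.1 = true}])

/-- Probability of group `g` under `D`. -/
def Pg {X : Type*} [MeasurableSpace X] (D : Measure (X × Bool)) (g : X → Bool) : ℝ :=
  (D {z : X × Bool | g z.1 = true}).toReal

/-- The set of all partition sums `∑ |f(z_{j+1}) - f(z_j)|` over finite partitions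
`0 = z_0 < z_1 < ⋯ < z_m = 1` of `[0,1]`.  `V(f) ≤ C` iff every element is `≤ C`. -/
def partitionSums (f : ℝ → ℝ) : Set ℝ :=
  {S | ∃ (m : ℕ) (z : ℕ → ℝ), z 0 = 0 ∧ z m = 1 ∧ (∀ i < m, z i < z (i + 1)) ∧
      S = ∑ i ∈ Finset.range m, |f (z (i + 1)) - f (z i)|}

/-- The step-calibration objective `ℓ_{σ,v,w,h,g}` evaluated (in expectation over `D`)
at the predictor `p`. -/
def objective {X : Type*} [MeasurableSpace X] (D : Measure (X × Bool))
    (σ v w : ℝ) (h : X → ℝ) (g : X → Bool) (p : X → ℝ) : ℝ :=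
  ∫ z, σ * (lab z.2 - p z.1) / Real.sqrt (Pg D g) * (if p z.1 ≤ v then 1 else 0) *
      (if h z.1 ≤ w then 1 else 0) * (if g z.1 = true then 1 else 0) ∂D

/-- The worst-case (supremum) objective value of a predictor `p` over all
`σ ∈ {+1,-1}`, `v, w ∈ [0,1]`, `h ∈ H`, `g ∈ G`. -/
def supObj {X : Type*} [MeasurableSpace X] (D : Measure (X × Bool))
    (G : Set (X → Bool)) (H : Set (X → ℝ)) (p : X → ℝ) : ℝ :=
  sSup {r | ∃ σ ∈ ({1, -1} : Set ℝ), ∃ v ∈ Icc (0:ℝ) 1, ∃ w ∈ Icc (0:ℝ) 1,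
    ∃ h ∈ H, ∃ g ∈ G, r = objective D σ v w h g p}

private lemma integrable_of_bdd1 {α : Type*} [MeasurableSpace α] (μ : Measure α)
    [IsFiniteMeasure μ] {f : α → ℝ} (hf : Measurable f) (hb : ∀ x, |f x| ≤ 1) :
    Integrable f μ :=
  (integrable_const (1:ℝ)).mono' hf.aestronglyMeasurable (Filter.Eventually.of_forall hb)

/-- The minimax value of the step-calibration multi-objective game is
zero; every predictor has nonnegative worst-case objective; and any measurable
`[0,1]`-valued version `p̄` of the conditional expectation `x ↦ E[y | x]` makes every
objective vanish. -/
theorem stmt6 {X : Type*} [MeasurableSpace X]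
    (D : Measure (X × Bool)) [IsProbabilityMeasure D]
    (G : Set (X → Bool)) (hGne : G.Nonempty) (hGmeas : ∀ g ∈ G, Measurable g)
    (hGpos : ∀ g ∈ G, 0 < Pg D g)
    (H : Set (X → ℝ)) (hHne : H.Nonempty) (hHmeas : ∀ h ∈ H, Measurable h)
    (hHrange : ∀ h ∈ H, ∀ x, h x ∈ Icc (0:ℝ) 1)
    -- p̄ is a measurable [0,1]-valued version of x ↦ E[y | x]:
    -- for every measurable A ⊆ X, ∫_{x ∈ A} p̄(x) dD = D(A × {1})
    (pbar : X → ℝ) (hpbarmeas : Measurable pbar) (hpbarrange : ∀ x, pbar x ∈ Icc (0:ℝ) 1)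
    (hpbar : ∀ A : Set X, MeasurableSet A →
      ∫ z in {z : X × Bool | z.1 ∈ A}, pbar z.1 ∂D =
        (D {z : X × Bool | z.1 ∈ A ∧ z.2 = true}).toReal) :
    -- (a) the minimax value of the game is zero
    sInf {r | ∃ q : X → ℝ, Measurable q ∧ (∀ x, q x ∈ Icc (0:ℝ) 1) ∧
        r = supObj D G H q} = 0 ∧
    -- (b) every measurable predictor into [0,1] has nonnegative worst-case objective
    (∀ q : X → ℝ, Measurable q → (∀ x, q x ∈ Icc (0:ℝ) 1) → 0 ≤ supObj D G H q) ∧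
    -- (c) the Bayes predictor p̄ makes every objective vanish
    (∀ σ ∈ ({1, -1} : Set ℝ), ∀ v ∈ Icc (0:ℝ) 1, ∀ w ∈ Icc (0:ℝ) 1, ∀ h ∈ H, ∀ g ∈ G,
      objective D σ v w h g pbar = 0) := by
  -- part (c)
  have hc : ∀ σ ∈ ({1, -1} : Set ℝ), ∀ v ∈ Icc (0:ℝ) 1, ∀ w ∈ Icc (0:ℝ) 1, ∀ h ∈ H, ∀ g ∈ G,
      objective D σ v w h g pbar = 0 := by
    intro σ hσ v hv w hw h hH g hG
    set A : Set X := {x : X | pbar x ≤ v ∧ h x ≤ w ∧ g x = true} with hAdef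
    have hAmeas : MeasurableSet A :=
      (measurableSet_le hpbarmeas measurable_const).inter
        ((measurableSet_le (hHmeas h hH) measurable_const).inter
          ((hGmeas g hG) (measurableSet_singleton true)))
    set S : Set (X × Bool) := {z : X × Bool | z.1 ∈ A} with hSdef
    have hSmeas : MeasurableSet S := measurable_fst hAmeas
    have hTmeas : MeasurableSet {z : X × Bool | z.2 = true} :=
      measurable_snd (measurableSet_singleton true)
    have hint1 : Integrable (fun z : X × Bool => lab z.2) (D.restrict S) := by
      refine integrable_of_bdd1 _ ?_ ?_
      · exact (measurable_of_countable lab).comp measurable_snd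
      · intro z; rcases z with ⟨x, y⟩; cases y <;> simp [lab]
    have hint2 : Integrable (fun z : X × Bool => pbar z.1) (D.restrict S) := by
      refine integrable_of_bdd1 _ (hpbarmeas.comp measurable_fst) ?_
      intro z
      rcases hpbarrange z.1 with ⟨h0, h1⟩
      rw [abs_le]; constructor <;> linarith
    have hlabint : ∫ z in S, lab z.2 ∂D =
        (D {z : X × Bool | z.1 ∈ A ∧ z.2 = true}).toReal := by
      have hfun : (fun z : X × Bool => lab z.2) =
          Set.indicator {z : X × Bool | z.2 = true} (fun _ => (1:ℝ)) := by
        funext z; rcases z with ⟨x, y⟩; cases y <;> simp [lab, Set.indicator_apply]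
      rw [hfun, setIntegral_indicator hTmeas, setIntegral_const]
      have : S ∩ {z : X × Bool | z.2 = true} = {z : X × Bool | z.1 ∈ A ∧ z.2 = true} := rfl
      rw [this]; simp; rfl
    have hkey : ∫ z in S, (lab z.2 - pbar z.1) ∂D = 0 := by
      rw [integral_sub hint1 hint2, hlabint, hpbar A hAmeas, sub_self]
    have heq : (fun z : X × Bool => σ * (lab z.2 - pbar z.1) / Real.sqrt (Pg D g) *
        (if pbar z.1 ≤ v then 1 else 0) * (if h z.1 ≤ w then 1 else 0) *
        (if g z.1 = true then 1 else 0)) =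
        fun z : X × Bool => (σ / Real.sqrt (Pg D g)) *
          S.indicator (fun z : X × Bool => lab z.2 - pbar z.1) z := by
      funext z
      by_cases h1 : pbar z.1 ≤ v <;> by_cases h2 : h z.1 ≤ w <;> by_cases h3 : g z.1 = true <;>
        simp [Set.indicator_apply, hSdef, hAdef, h1, h2, h3] <;> ring
    rw [objective, heq, integral_const_mul, integral_indicator hSmeas, hkey, mul_zero]
  -- part (b)
  have hb : ∀ q : X → ℝ, Measurable q → (∀ x, q x ∈ Icc (0:ℝ) 1) → 0 ≤ supObj D G H q := by
    intro q hq hqr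
    obtain ⟨h, hH⟩ := hHne
    obtain ⟨g, hG⟩ := hGne
    have hneg : objective D (-1) 0 1 h g q = -(objective D 1 0 1 h g q) := by
      rw [objective, objective, ← integral_neg]
      congr 1; funext z; ring
    rcases le_total 0 (objective D 1 0 1 h g q) with h0 | h0
    · refine Real.sSup_nonneg' ⟨objective D 1 0 1 h g q, ?_, h0⟩
      exact ⟨1, by norm_num, 0, by norm_num [Set.mem_Icc], 1, by norm_num [Set.mem_Icc],
        h, hH, g, hG, rfl⟩
    · refine Real.sSup_nonneg' ⟨-(objective D 1 0 1 h g q), ?_, by linarith⟩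
      exact ⟨-1, by norm_num, 0, by norm_num [Set.mem_Icc], 1, by norm_num [Set.mem_Icc],
        h, hH, g, hG, hneg.symm⟩
  -- supObj of pbar is zero
  have hsup0 : supObj D G H pbar = 0 := by
    obtain ⟨h, hH⟩ := hHne
    obtain ⟨g, hG⟩ := hGne
    have hset : {r | ∃ σ ∈ ({1, -1} : Set ℝ), ∃ v ∈ Icc (0:ℝ) 1, ∃ w ∈ Icc (0:ℝ) 1,
        ∃ h ∈ H, ∃ g ∈ G, r = objective D σ v w h g pbar} = {0} := by
      apply Set.eq_singleton_iff_unique_mem.mpr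
      constructor
      · exact ⟨1, by norm_num, 0, by norm_num [Set.mem_Icc], 1, by norm_num [Set.mem_Icc],
          h, hH, g, hG, (hc 1 (by norm_num) 0 (by norm_num [Set.mem_Icc]) 1
            (by norm_num [Set.mem_Icc]) h hH g hG).symm⟩
      · rintro r ⟨σ, hσ, v, hv, w, hw, h', hH', g', hG', rfl⟩
        exact hc σ hσ v hv w hw h' hH' g' hG'
    rw [supObj, hset, csSup_singleton]
  -- assemble
  have h0mem : (0:ℝ) ∈ {r | ∃ q : X → ℝ, Measurable q ∧ (∀ x, q x ∈ Icc (0:ℝ) 1) ∧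
      r = supObj D G H q} := ⟨pbar, hpbarmeas, hpbarrange, hsup0.symm⟩
  have hlb : ∀ r ∈ {r | ∃ q : X → ℝ, Measurable q ∧ (∀ x, q x ∈ Icc (0:ℝ) 1) ∧
      r = supObj D G H q}, (0:ℝ) ≤ r := by
    rintro r ⟨q, hq, hqr, rfl⟩; exact hb q hq hqr
  exact ⟨le_antisymm (csInf_le ⟨0, hlb⟩ h0mem) (le_csInf ⟨0, h0mem⟩ hlb), hb, hc⟩

end
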